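/- Let n_x, n_y, n_z be i.i.d. symmetric real random variables with mean 0, variance σ², finite fourth moment μ'₄, and δ_y, δ_z ∈ ℝ. Define z := (n_x − n_y + δ_y)² − (n_x − n_z + δ_z)². Then E(z) = δ_y² − δ_z² and Var(z) = 2μ'₄ + 6σ⁴ + 8σ²(δ_y² + δ_z² − δ_y δ_z). -/

import Mathlib

open MeasureTheory ProbabilityTheory

set_option maxHeartbeats 1000000

/-- For i.i.d. symmetric random variables `n_x, n_y, n_z` with variance `σ²` and fourth
moment `μ₄`, and `z := (n_x − n_y + δ_y)² − (n_x − n_z + δ_z)²`, one has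
`E(z) = δ_y² − δ_z²` and `Var(z) = 2μ₄ + 6σ⁴ + 8σ²(δ_y² + δ_z² − δ_yδ_z)`. -/
theorem mean_and_variance_of_squared_distance_difference
    {Ω : Type*} [MeasurableSpace Ω] (P : Measure Ω) [IsProbabilityMeasure P]
    (n : Fin 3 → Ω → ℝ) (hm : ∀ i, Measurable (n i))
    (hindep : iIndepFun n P)
    (μ : Measure ℝ) (hlaw : ∀ i, Measure.map (n i) P = μ)
    (hsymm : Measure.map (fun x : ℝ => -x) μ = μ)
    (σ μ₄ : ℝ)
    (hmean : ∫ x, x ∂μ = 0)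
    (hvar : ∫ x, x ^ 2 ∂μ = σ ^ 2)
    (hm4 : ∫ x, x ^ 4 ∂μ = μ₄)
    (hint : Integrable (fun x => x ^ 4) μ)
    (δy δz : ℝ) :
    (∫ ω, ((n 0 ω - n 1 ω + δy) ^ 2 - (n 0 ω - n 2 ω + δz) ^ 2) ∂P)
      = δy ^ 2 - δz ^ 2 ∧
    variance (fun ω => (n 0 ω - n 1 ω + δy) ^ 2 - (n 0 ω - n 2 ω + δz) ^ 2) P
      = 2 * μ₄ + 6 * σ ^ 4 + 8 * σ ^ 2 * (δy ^ 2 + δz ^ 2 - δy * δz) := by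
  have hμprob : IsProbabilityMeasure μ := by
    rw [← hlaw 0]; exact Measure.isProbabilityMeasure_map (hm 0).aemeasurable
  -- integrability of low moments
  have ik : ∀ k, k ≤ 4 → Integrable (fun x : ℝ => x ^ k) μ := by
    intro k hk
    have hgint : Integrable (fun x : ℝ => x ^ 4 + 1) μ := by
      have := hint.add (integrable_const (1:ℝ)); simpa using this
    refine hgint.mono
      ((measurable_id.pow_const k).aestronglyMeasurable)
      (Filter.Eventually.of_forall fun x => ?_)
    have h4 : |x| ^ 4 = x ^ 4 := by rw [← abs_pow, abs_of_nonneg (by positivity)]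
    have hx : (0:ℝ) ≤ |x| := abs_nonneg x
    rw [Real.norm_eq_abs, Real.norm_eq_abs, abs_pow,
      abs_of_pos (by positivity : (0:ℝ) < x ^ 4 + 1)]
    interval_cases k
    · rw [pow_zero]; nlinarith [sq_nonneg (x ^ 2)]
    · nlinarith [sq_nonneg (|x| ^ 2 - 1), sq_nonneg (|x| - 1)]
    · nlinarith [sq_nonneg (|x| ^ 2 - 1)]
    · nlinarith [sq_nonneg (|x| ^ 2 - |x|), sq_nonneg (|x| - 1), sq_nonneg (|x| ^ 2 - 1)]
    · nlinarith
  -- third moment vanishes by symmetry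
  have I3 : ∫ x, x ^ 3 ∂μ = 0 := by
    have h := integral_map (μ := μ) (φ := fun x : ℝ => -x) measurable_neg.aemeasurable
      (f := fun x : ℝ => x ^ 3)
      (by rw [hsymm]; exact (measurable_id.pow_const 3).aestronglyMeasurable)
    rw [hsymm] at h
    have h2 : ∫ x, (-x) ^ 3 ∂μ = -∫ x, x ^ 3 ∂μ := by
      rw [← integral_neg]
      congr 1; funext x; ring
    rw [h2] at h
    linarith
  -- integral of a polynomial of degree ≤ 4
  have L2 : ∀ c0 c1 c2 c3 c4 : ℝ,
      Integrable (fun t : ℝ => c0 + c1 * t + c2 * t ^ 2 + c3 * t ^ 3 + c4 * t ^ 4) μ ∧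
      (∫ t, (c0 + c1 * t + c2 * t ^ 2 + c3 * t ^ 3 + c4 * t ^ 4) ∂μ)
        = c0 + c2 * σ ^ 2 + c4 * μ₄ := by
    intro c0 c1 c2 c3 c4
    have h0 : Integrable (fun _ : ℝ => c0) μ := integrable_const c0
    have h1 : Integrable (fun t : ℝ => c1 * t) μ := by
      simpa using (ik 1 (by norm_num)).const_mul c1
    have h2 : Integrable (fun t : ℝ => c2 * t ^ 2) μ := (ik 2 (by norm_num)).const_mul c2
    have h3 : Integrable (fun t : ℝ => c3 * t ^ 3) μ := (ik 3 (by norm_num)).const_mul c3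
    have h4 : Integrable (fun t : ℝ => c4 * t ^ 4) μ := (ik 4 le_rfl).const_mul c4
    have h01 : Integrable (fun t : ℝ => c0 + c1 * t) μ := h0.add h1
    have h012 : Integrable (fun t : ℝ => c0 + c1 * t + c2 * t ^ 2) μ := h01.add h2
    have h0123 : Integrable (fun t : ℝ => c0 + c1 * t + c2 * t ^ 2 + c3 * t ^ 3) μ := h012.add h3
    refine ⟨h0123.add h4, ?_⟩
    rw [integral_add h0123 h4,
      integral_add h012 h3,
      integral_add h01 h2,
      integral_add h0 h1,
      integral_const, integral_const_mul, integral_const_mul, integral_const_mul,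
      integral_const_mul]
    have h1' : ∫ t, t ∂μ = 0 := hmean
    rw [h1', hvar, I3, hm4]
    simp [measure_univ]
  -- joint law
  set T : Ω → (ℝ × ℝ) × ℝ := fun ω => ((n 0 ω, n 1 ω), n 2 ω) with hT
  have hTm : Measurable T := ((hm 0).prodMk (hm 1)).prodMk (hm 2)
  have hpair : Measure.map (fun ω => (n 0 ω, n 1 ω)) P = μ.prod μ := by
    rw [(indepFun_iff_map_prod_eq_prod_map_map (hm 0).aemeasurable (hm 1).aemeasurable).mp
        (hindep.indepFun (show (0 : Fin 3) ≠ 1 by decide)), hlaw 0, hlaw 1]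
  have hmapT : Measure.map T P = (μ.prod μ).prod μ := by
    rw [hT,
      (indepFun_iff_map_prod_eq_prod_map_map ((hm 0).prodMk (hm 1)).aemeasurable
        (hm 2).aemeasurable).mp
        (hindep.indepFun_prodMk hm 0 1 2 (by decide) (by decide)), hpair, hlaw 2]
  set ρ : Measure ((ℝ × ℝ) × ℝ) := (μ.prod μ).prod μ with hρ
  -- g1 and its square
  set g1 : (ℝ × ℝ) × ℝ → ℝ :=
    fun p => (p.1.1 - p.1.2 + δy) ^ 2 - (p.1.1 - p.2 + δz) ^ 2 with hg1
  have hg1m : Measurable g1 := by rw [hg1]; fun_prop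
  -- integrable bound
  have hx4 : Integrable (fun p : (ℝ × ℝ) × ℝ => p.1.1 ^ 4) ρ := by
    have h := ((ik 4 le_rfl).mul_prod
      (integrable_const (1:ℝ) : Integrable (fun _ : ℝ => (1:ℝ)) μ)).mul_prod
      (integrable_const (1:ℝ) : Integrable (fun _ : ℝ => (1:ℝ)) μ)
    simpa using h
  have hy4 : Integrable (fun p : (ℝ × ℝ) × ℝ => p.1.2 ^ 4) ρ := by
    have h := ((integrable_const (1:ℝ) : Integrable (fun _ : ℝ => (1:ℝ)) μ).mul_prod
      (ik 4 le_rfl)).mul_prod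
      (integrable_const (1:ℝ) : Integrable (fun _ : ℝ => (1:ℝ)) μ)
    simpa using h
  have hz4 : Integrable (fun p : (ℝ × ℝ) × ℝ => p.2 ^ 4) ρ := by
    have h := (integrable_const (1:ℝ) :
      Integrable (fun _ : ℝ × ℝ => (1:ℝ)) (μ.prod μ)).mul_prod (ik 4 le_rfl)
    simpa using h
  have hBint : Integrable (fun p : (ℝ × ℝ) × ℝ =>
      (108 * (1 + δy ^ 4 + δz ^ 4)) * (1 + p.1.1 ^ 4 + p.1.2 ^ 4 + p.2 ^ 4)) ρ :=
    ((((integrable_const 1).add hx4).add hy4).add hz4).const_mul _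
  have hcube : ∀ u v w : ℝ, (u + v + w) ^ 4 ≤ 27 * (u ^ 4 + v ^ 4 + w ^ 4) := by
    intro u v w
    have h2 : (u + v + w) ^ 2 ≤ 3 * (u ^ 2 + v ^ 2 + w ^ 2) := by
      nlinarith [sq_nonneg (u - v), sq_nonneg (u - w), sq_nonneg (v - w)]
    have h3 : (u ^ 2 + v ^ 2 + w ^ 2) ^ 2 ≤ 3 * (u ^ 4 + v ^ 4 + w ^ 4) := by
      nlinarith [sq_nonneg (u ^ 2 - v ^ 2), sq_nonneg (u ^ 2 - w ^ 2),
        sq_nonneg (v ^ 2 - w ^ 2)]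
    calc (u + v + w) ^ 4 = ((u + v + w) ^ 2) ^ 2 := by ring
      _ ≤ (3 * (u ^ 2 + v ^ 2 + w ^ 2)) ^ 2 := by
          have := sq_nonneg (u + v + w)
          nlinarith
      _ = 9 * (u ^ 2 + v ^ 2 + w ^ 2) ^ 2 := by ring
      _ ≤ 27 * (u ^ 4 + v ^ 4 + w ^ 4) := by linarith
  have hdom : ∀ x y z : ℝ, ((x - y + δy) ^ 2 - (x - z + δz) ^ 2) ^ 2
      ≤ (108 * (1 + δy ^ 4 + δz ^ 4)) * (1 + x ^ 4 + y ^ 4 + z ^ 4) := by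
    intro x y z
    have h1 := hcube x (-y) δy
    have h2 := hcube x (-z) δz
    have h3 : ((x - y + δy) ^ 2 - (x - z + δz) ^ 2) ^ 2
        ≤ 2 * (x - y + δy) ^ 4 + 2 * (x - z + δz) ^ 4 := by
      nlinarith [sq_nonneg ((x - y + δy) ^ 2 + (x - z + δz) ^ 2)]
    have e1 : (x + -y + δy) ^ 4 = (x - y + δy) ^ 4 := by ring
    have e2 : (x + -z + δz) ^ 4 = (x - z + δz) ^ 4 := by ring
    rw [e1] at h1; rw [e2] at h2
    have px : (0:ℝ) ≤ x ^ 4 := by positivity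
    have py : (0:ℝ) ≤ y ^ 4 := by positivity
    have pz : (0:ℝ) ≤ z ^ 4 := by positivity
    have pdy : (0:ℝ) ≤ δy ^ 4 := by positivity
    have pdz : (0:ℝ) ≤ δz ^ 4 := by positivity
    have hexp : (108 * (1 + δy ^ 4 + δz ^ 4)) * (1 + x ^ 4 + y ^ 4 + z ^ 4)
        = 108 + 108 * x ^ 4 + 108 * y ^ 4 + 108 * z ^ 4
          + 108 * δy ^ 4 + 108 * (δy ^ 4 * x ^ 4) + 108 * (δy ^ 4 * y ^ 4)
          + 108 * (δy ^ 4 * z ^ 4)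
          + 108 * δz ^ 4 + 108 * (δz ^ 4 * x ^ 4) + 108 * (δz ^ 4 * y ^ 4)
          + 108 * (δz ^ 4 * z ^ 4) := by ring
    rw [hexp]
    linarith [mul_nonneg pdy px, mul_nonneg pdy py, mul_nonneg pdy pz,
      mul_nonneg pdz px, mul_nonneg pdz py, mul_nonneg pdz pz]
  have hIg2 : Integrable (fun p : (ℝ × ℝ) × ℝ => (g1 p) ^ 2) ρ := by
    refine hBint.mono ((hg1m.pow_const 2).aestronglyMeasurable)
      (Filter.Eventually.of_forall fun p => ?_)
    rw [Real.norm_eq_abs, Real.norm_eq_abs, abs_of_nonneg (sq_nonneg _),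
      abs_of_nonneg (by positivity)]
    exact hdom p.1.1 p.1.2 p.2
  have hMem : MemLp g1 2 ρ := (memLp_two_iff_integrable_sq hg1m.aestronglyMeasurable).mpr hIg2
  have hIg1 : Integrable g1 ρ := hMem.integrable one_le_two
  -- compute the mean
  have inner1 : ∀ p : ℝ × ℝ, ∫ z, g1 (p, z) ∂μ
      = (p.1 - p.2 + δy) ^ 2 - (p.1 + δz) ^ 2 - σ ^ 2 := by
    intro p
    have e : (fun z : ℝ => g1 (p, z)) = fun z : ℝ =>
        (((p.1 - p.2 + δy) ^ 2 - (p.1 + δz) ^ 2) + (2 * (p.1 + δz)) * z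
          + (-1) * z ^ 2 + 0 * z ^ 3 + 0 * z ^ 4) := by
      funext z; rw [hg1]; ring
    rw [e, (L2 _ _ _ _ _).2]; ring
  have hI2m : Integrable (fun p : ℝ × ℝ =>
      (p.1 - p.2 + δy) ^ 2 - (p.1 + δz) ^ 2 - σ ^ 2) (μ.prod μ) := by
    have h := hIg1.integral_prod_left
    simp only [inner1] at h
    exact h
  have inner2 : ∀ x : ℝ, (∫ y, ((x - y + δy) ^ 2 - (x + δz) ^ 2 - σ ^ 2) ∂μ)
      = (x + δy) ^ 2 - (x + δz) ^ 2 := by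
    intro x
    have e : (fun y : ℝ => (x - y + δy) ^ 2 - (x + δz) ^ 2 - σ ^ 2) = fun y : ℝ =>
        (((x + δy) ^ 2 - (x + δz) ^ 2 - σ ^ 2) + (-(2 * (x + δy))) * y
          + 1 * y ^ 2 + 0 * y ^ 3 + 0 * y ^ 4) := by
      funext y; ring
    rw [e, (L2 _ _ _ _ _).2]; ring
  have hE1 : ∫ p, g1 p ∂ρ = δy ^ 2 - δz ^ 2 := by
    rw [hρ, integral_prod _ hIg1]
    simp only [inner1]
    rw [integral_prod _ hI2m]
    simp only [inner2]
    have e : (fun x : ℝ => (x + δy) ^ 2 - (x + δz) ^ 2) = fun x : ℝ =>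
        ((δy ^ 2 - δz ^ 2) + (2 * δy - 2 * δz) * x + 0 * x ^ 2 + 0 * x ^ 3 + 0 * x ^ 4) := by
      funext x; ring
    rw [e, (L2 _ _ _ _ _).2]; ring
  -- compute the second moment
  have inner1s : ∀ p : ℝ × ℝ, ∫ z, (g1 (p, z)) ^ 2 ∂μ
      = (p.1 - p.2 + δy) ^ 4 - 2 * (p.1 - p.2 + δy) ^ 2 * (p.1 + δz) ^ 2
        + (p.1 + δz) ^ 4
        + (6 * (p.1 + δz) ^ 2 - 2 * (p.1 - p.2 + δy) ^ 2) * σ ^ 2 + μ₄ := by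
    intro p
    have e : (fun z : ℝ => (g1 (p, z)) ^ 2) = fun z : ℝ =>
        (((p.1 - p.2 + δy) ^ 4 - 2 * (p.1 - p.2 + δy) ^ 2 * (p.1 + δz) ^ 2
            + (p.1 + δz) ^ 4)
          + (4 * (p.1 - p.2 + δy) ^ 2 * (p.1 + δz) - 4 * (p.1 + δz) ^ 3) * z
          + (6 * (p.1 + δz) ^ 2 - 2 * (p.1 - p.2 + δy) ^ 2) * z ^ 2
          + (-(4 * (p.1 + δz))) * z ^ 3 + 1 * z ^ 4) := by
      funext z; rw [hg1]; ring
    rw [e, (L2 _ _ _ _ _).2]; ring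
  have hI2s : Integrable (fun p : ℝ × ℝ =>
      (p.1 - p.2 + δy) ^ 4 - 2 * (p.1 - p.2 + δy) ^ 2 * (p.1 + δz) ^ 2
        + (p.1 + δz) ^ 4
        + (6 * (p.1 + δz) ^ 2 - 2 * (p.1 - p.2 + δy) ^ 2) * σ ^ 2 + μ₄) (μ.prod μ) := by
    have h := hIg2.integral_prod_left
    simp only [inner1s] at h
    exact h
  have inner2s : ∀ x : ℝ, (∫ y,
      ((x - y + δy) ^ 4 - 2 * (x - y + δy) ^ 2 * (x + δz) ^ 2 + (x + δz) ^ 4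
        + (6 * (x + δz) ^ 2 - 2 * (x - y + δy) ^ 2) * σ ^ 2 + μ₄) ∂μ)
      = (x + δy) ^ 4 + (x + δz) ^ 4 - 2 * (x + δz) ^ 2 * (x + δy) ^ 2
        + 4 * σ ^ 2 * (x + δy) ^ 2 + 4 * σ ^ 2 * (x + δz) ^ 2
        - 2 * σ ^ 4 + 2 * μ₄ := by
    intro x
    have e : (fun y : ℝ =>
        (x - y + δy) ^ 4 - 2 * (x - y + δy) ^ 2 * (x + δz) ^ 2 + (x + δz) ^ 4
          + (6 * (x + δz) ^ 2 - 2 * (x - y + δy) ^ 2) * σ ^ 2 + μ₄) = fun y : ℝ =>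
        (((x + δy) ^ 4 - 2 * (x + δz) ^ 2 * (x + δy) ^ 2 + (x + δz) ^ 4
            + 6 * σ ^ 2 * (x + δz) ^ 2 - 2 * σ ^ 2 * (x + δy) ^ 2 + μ₄)
          + (-(4 * (x + δy) ^ 3) + 4 * (x + δz) ^ 2 * (x + δy)
              + 4 * σ ^ 2 * (x + δy)) * y
          + (6 * (x + δy) ^ 2 - 2 * (x + δz) ^ 2 - 2 * σ ^ 2) * y ^ 2
          + (-(4 * (x + δy))) * y ^ 3 + 1 * y ^ 4) := by
      funext y; ring
    rw [e, (L2 _ _ _ _ _).2]; ring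
  have hE2 : ∫ p, (g1 p) ^ 2 ∂ρ
      = (δy ^ 2 - δz ^ 2) ^ 2 + 2 * μ₄ + 6 * σ ^ 4
        + 8 * σ ^ 2 * (δy ^ 2 + δz ^ 2 - δy * δz) := by
    rw [hρ, integral_prod _ hIg2]
    simp only [inner1s]
    rw [integral_prod _ hI2s]
    simp only [inner2s]
    have e : (fun x : ℝ =>
        (x + δy) ^ 4 + (x + δz) ^ 4 - 2 * (x + δz) ^ 2 * (x + δy) ^ 2
          + 4 * σ ^ 2 * (x + δy) ^ 2 + 4 * σ ^ 2 * (x + δz) ^ 2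
          - 2 * σ ^ 4 + 2 * μ₄) = fun x : ℝ =>
        (((δy - δz) ^ 2 * (δy + δz) ^ 2 + 4 * σ ^ 2 * (δy ^ 2 + δz ^ 2)
            - 2 * σ ^ 4 + 2 * μ₄)
          + (4 * (δy - δz) ^ 2 * (δy + δz) + 8 * σ ^ 2 * (δy + δz)) * x
          + (4 * (δy - δz) ^ 2 + 8 * σ ^ 2) * x ^ 2 + 0 * x ^ 3 + 0 * x ^ 4) := by
      funext x; ring
    rw [e, (L2 _ _ _ _ _).2]; ring
  -- transfer to Ω
  have hg1sm : AEStronglyMeasurable g1 (Measure.map T P) := by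
    rw [hmapT]; exact hg1m.aestronglyMeasurable
  have key1 : (∫ ω, ((n 0 ω - n 1 ω + δy) ^ 2 - (n 0 ω - n 2 ω + δz) ^ 2) ∂P)
      = δy ^ 2 - δz ^ 2 := by
    have h := integral_map hTm.aemeasurable hg1sm
    rw [hmapT] at h
    rw [← hE1, hρ, ← h]
  have hg2sm : AEStronglyMeasurable (fun p : (ℝ × ℝ) × ℝ => (g1 p) ^ 2)
      (Measure.map T P) := by
    rw [hmapT]; exact (hg1m.pow_const 2).aestronglyMeasurable
  have key2 : (∫ ω, ((n 0 ω - n 1 ω + δy) ^ 2 - (n 0 ω - n 2 ω + δz) ^ 2) ^ 2 ∂P)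
      = (δy ^ 2 - δz ^ 2) ^ 2 + 2 * μ₄ + 6 * σ ^ 4
        + 8 * σ ^ 2 * (δy ^ 2 + δz ^ 2 - δy * δz) := by
    have h := integral_map hTm.aemeasurable hg2sm
    rw [hmapT] at h
    rw [← hE2, hρ, ← h]
  refine ⟨key1, ?_⟩
  have hMemP : MemLp (fun ω => (n 0 ω - n 1 ω + δy) ^ 2 - (n 0 ω - n 2 ω + δz) ^ 2) 2 P := by
    have h : MemLp (g1 ∘ T) 2 P := by
      refine (memLp_map_measure_iff hg1sm hTm.aemeasurable).mp ?_
      rw [hmapT]; exact hMem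
    exact h
  rw [variance_eq_sub hMemP]
  have hpow : (∫ ω, ((fun ω => (n 0 ω - n 1 ω + δy) ^ 2 - (n 0 ω - n 2 ω + δz) ^ 2) ^ 2) ω ∂P)
      = ∫ ω, ((n 0 ω - n 1 ω + δy) ^ 2 - (n 0 ω - n 2 ω + δz) ^ 2) ^ 2 ∂P := by
    simp only [Pi.pow_apply]
  rw [hpow, key2, key1]
  ring
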